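/- Let X be a finitely supported subset of an invariant set. If X contains an infinite subset Y equipped with a finitely supported total order ≤, then Y is uniformly supported (every element of Y is supported by supp(≤) ∪ supp(Y)); consequently X contains an infinite uniformly supported subset. -/

import Mathlib

open Pointwise

/-- The group of finitary permutations of the set `A` of atoms:
bijections of `A` that move only finitely many atoms. -/
def finPerm (A : Type*) : Subgroup (Equiv.Perm A) where
  carrier := {π | {a | π a ≠ a}.Finite}
  one_mem' := by simp
  mul_mem' := by
    intro π σ hπ hσ
    apply Set.Finite.subset (hπ.union hσ)
    intro a ha
    by_contra hc
    simp only [Set.mem_union, Set.mem_setOf_eq, not_or, not_not] at hc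
    exact ha (by simp [Equiv.Perm.mul_apply, hc.1, hc.2])
  inv_mem' := by
    intro π hπ
    apply Set.Finite.subset hπ
    intro a ha
    simp only [Set.mem_setOf_eq] at ha ⊢
    intro h
    exact ha (Equiv.Perm.inv_eq_iff_eq.mpr h.symm)

/-- `x` is finitely supported: some finite set of atoms supports it. -/
def FinitelySupported (A : Type*) {X : Type*} [MulAction (finPerm A) X] (x : X) : Prop :=
  ∃ S : Set A, S.Finite ∧ MulAction.Supports (finPerm A) S x

/-- A subset `Z` of an `S_A`-set is uniformly supported if a single finite set
of atoms supports every element of `Z`. -/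
def UniformlySupported (A : Type*) {X : Type*} [MulAction (finPerm A) X] (Z : Set X) : Prop :=
  ∃ S : Set A, S.Finite ∧ ∀ x ∈ Z, MulAction.Supports (finPerm A) S x

/-- The least support of `x`: the intersection of all finite sets of atoms supporting `x`. -/
noncomputable def supp (A : Type*) {X : Type*} [MulAction (finPerm A) X] (x : X) : Set A :=
  ⋂₀ {S : Set A | S.Finite ∧ MulAction.Supports (finPerm A) S x}

/-- `Z` contains no infinite uniformly supported subset
(`Z` is "FSM non-uniformly infinite"). -/
def NoInfUS (A : Type*) {X : Type*} [MulAction (finPerm A) X] (Z : Set X) : Prop :=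
  ∀ W ⊆ Z, UniformlySupported A W → W.Finite

/-- The uniform powerset `℘_us(X)`: all uniformly supported subsets of `X`. -/
def usPowerset (A : Type*) {X : Type*} [MulAction (finPerm A) X] (Z : Set X) : Set (Set X) :=
  {W | W ⊆ Z ∧ UniformlySupported A W}

/-- The finite powerset `℘_fin(X)`: all finite subsets of `X`. -/
def finPowerset {X : Type*} (Z : Set X) : Set (Set X) :=
  {W | W ⊆ Z ∧ W.Finite}

/-- `S` supports the function `f` on the domain `X` (Proposition 2.18'(2)):
for every `π` fixing `S` pointwise and every `x ∈ X`, `π • x ∈ X` and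
`f (π • x) = π • f x`. -/
def FnSupportsOn (A : Type*) {Y : Type*} [MulAction (finPerm A) Y]
    (X : Set Y) (S : Set A) (f : Y → Y) : Prop :=
  ∀ π : finPerm A, (∀ a ∈ S, π • a = a) → ∀ x ∈ X, π • x ∈ X ∧ f (π • x) = π • f x

/-- The least support of a function `f` with domain `X`. -/
noncomputable def fnSupp (A : Type*) {Y : Type*} [MulAction (finPerm A) Y]
    (X : Set Y) (f : Y → Y) : Set A :=
  ⋂₀ {S : Set A | S.Finite ∧ FnSupportsOn A X S f}


lemma finPerm_pow_eq_one {A : Type*} (π : finPerm A) : ∃ n : ℕ, 0 < n ∧ π ^ n = 1 := by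
  classical
  have hM : {a | (π : Equiv.Perm A) a ≠ a}.Finite := π.2
  set M : Set A := {a | (π : Equiv.Perm A) a ≠ a} with hMdef
  set K : Set (Equiv.Perm A) := {σ | ∀ a, σ a ≠ a → a ∈ M} with hKdef
  -- K is finite
  have hmapsto : ∀ σ ∈ K, ∀ a ∈ M, σ a ∈ M := by
    intro σ hσ a ha
    by_contra hb
    have h1 : σ (σ a) = σ a := by
      by_contra h
      exact hb (hσ _ h)
    have := σ.injective h1
    rw [this] at hb; exact hb ha
  haveI : Finite ↥(hM.toFinset : Set A) := by
    simp only [Set.Finite.coe_toFinset]; exact hM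
  have hKfin : Finite ↥K := by
    have hinj : Function.Injective (fun σ : ↥K =>
        (fun a : ↥(hM.toFinset : Set A) =>
          (⟨σ.1 a.1, by
            simp only [Set.Finite.coe_toFinset]
            exact hmapsto σ.1 σ.2 a.1 (by simpa only [Set.Finite.coe_toFinset] using a.2)⟩ :
            ↥(hM.toFinset : Set A)))) := by
      intro σ τ h
      ext1
      ext a
      by_cases ha : a ∈ M
      · have := congrFun h ⟨a, by simpa only [Set.Finite.coe_toFinset] using ha⟩
        exact congrArg Subtype.val this
      · have h1 : σ.1 a = a := by by_contra hc; exact ha (σ.2 _ hc)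
        have h2 : τ.1 a = a := by by_contra hc; exact ha (τ.2 _ hc)
        rw [h1, h2]
    exact Finite.of_injective _ hinj
  -- powers of π lie in K
  have hfixpow : ∀ a : A, (π : Equiv.Perm A) a = a → ∀ n : ℕ, ((π : Equiv.Perm A) ^ n) a = a := by
    intro a hfix n
    induction n with
    | zero => simp
    | succ k ih => rw [pow_succ, Equiv.Perm.mul_apply, hfix, ih]
  have hpow : ∀ n : ℕ, ((π : Equiv.Perm A) ^ n) ∈ K := by
    intro n a ha
    by_contra hb
    have hfix : (π : Equiv.Perm A) a = a := by simpa [hMdef] using hb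
    exact ha (hfixpow a hfix n)
  have cancel : ∀ m n : ℕ, m < n → (π : Equiv.Perm A) ^ m = (π : Equiv.Perm A) ^ n →
      ∃ k, 0 < k ∧ π ^ k = 1 := by
    intro m n hmn heq'
    refine ⟨n - m, by omega, ?_⟩
    have h1 : (π : Equiv.Perm A) ^ m * (π : Equiv.Perm A) ^ (n - m)
        = (π : Equiv.Perm A) ^ m * 1 := by
      rw [mul_one, ← pow_add]
      rw [show m + (n - m) = n by omega]
      exact heq'.symm
    have h2 : (π : Equiv.Perm A) ^ (n - m) = 1 := mul_left_cancel h1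
    ext1
    push_cast
    simpa using h2
  obtain ⟨m, n, hmn, heq⟩ := Finite.exists_ne_map_eq_of_infinite
    (fun n : ℕ => (⟨(π : Equiv.Perm A) ^ n, hpow n⟩ : ↥K))
  have heq' : (π : Equiv.Perm A) ^ m = (π : Equiv.Perm A) ^ n := congrArg Subtype.val heq
  rcases Nat.lt_trichotomy m n with h | h | h
  · exact cancel m n h heq'
  · exact absurd h hmn
  · exact cancel n m h heq'.symm

lemma finPerm_supports_inter {A Z : Type*} [Infinite A] [MulAction (finPerm A) Z]
    (x : Z) {S T : Set A} (hS : S.Finite) (hT : T.Finite)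
    (hSs : MulAction.Supports (finPerm A) S x) (hTs : MulAction.Supports (finPerm A) T x) :
    MulAction.Supports (finPerm A) (S ∩ T) x := by
  classical
  suffices H : ∀ n : ℕ, ∀ π : finPerm A,
      ((S \ T) ∩ {b | (π : Equiv.Perm A) b ≠ b}).ncard = n →
      (∀ b ∈ S ∩ T, π • b = b) → π • x = x by
    intro π hπ
    exact H _ π rfl (fun b hb => hπ hb)
  intro n
  induction n using Nat.strong_induction_on with
  | _ n IH =>
  intro π hcard hπ
  by_cases hD : ((S \ T) ∩ {b | (π : Equiv.Perm A) b ≠ b}) = ∅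
  · apply hSs π
    intro b hb
    by_cases hbT : b ∈ T
    · exact hπ b ⟨hb, hbT⟩
    · by_contra hne
      have : b ∈ (S \ T) ∩ {b | (π : Equiv.Perm A) b ≠ b} := ⟨⟨hb, hbT⟩, hne⟩
      rw [hD] at this
      exact this
  · obtain ⟨a, haD⟩ := Set.nonempty_iff_ne_empty.2 hD
    have haS : a ∈ S := haD.1.1
    have haT : a ∉ T := haD.1.2
    have hMfin : {b | (π : Equiv.Perm A) b ≠ b}.Finite := π.2
    have hfin : (S ∪ T ∪ {b | (π : Equiv.Perm A) b ≠ b} ∪ {a}).Finite :=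
      ((hS.union hT).union hMfin).union (Set.finite_singleton a)
    obtain ⟨c, hc⟩ := hfin.infinite_compl.nonempty
    simp only [Set.mem_compl_iff, Set.mem_union, Set.mem_singleton_iff, not_or] at hc
    obtain ⟨⟨⟨hcS, hcT⟩, hcM⟩, hca⟩ := hc
    have hcMfix : (π : Equiv.Perm A) c = c := by
      by_contra h; exact hcM h
    have hac : a ≠ c := fun h => hca h.symm
    set σ : finPerm A := ⟨Equiv.swap a c, by
      apply Set.Finite.subset ((Set.finite_singleton a).union (Set.finite_singleton c))
      intro b hb
      simp only [Set.mem_setOf_eq] at hb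
      by_contra hbc
      simp only [Set.mem_union, Set.mem_singleton_iff, not_or] at hbc
      exact hb (Equiv.swap_apply_of_ne_of_ne hbc.1 hbc.2)⟩ with hσdef
    have hσapp : ∀ b : A, σ • b = Equiv.swap a c b := fun b => rfl
    have hσinvapp : ∀ b : A, ((σ⁻¹ : finPerm A) : Equiv.Perm A) b = Equiv.swap a c b := by
      intro b
      have : ((σ⁻¹ : finPerm A) : Equiv.Perm A) = (Equiv.swap a c)⁻¹ := rfl
      rw [this, Equiv.swap_inv]
    have hσx : σ • x = x := by
      apply hTs σ
      intro b hb
      rw [hσapp]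
      exact Equiv.swap_apply_of_ne_of_ne (fun h => haT (h ▸ hb)) (fun h => hcT (h ▸ hb))
    have hσinvx : (σ⁻¹ : finPerm A) • x = x := by
      conv_lhs => rw [← hσx]
      rw [inv_smul_smul]
    set π' : finPerm A := σ * π * σ⁻¹ with hπ'def
    have hπ'app : ∀ b : A, (π' : Equiv.Perm A) b
        = Equiv.swap a c ((π : Equiv.Perm A) (Equiv.swap a c b)) := by
      intro b
      have : (π' : Equiv.Perm A) = (σ : Equiv.Perm A) * (π : Equiv.Perm A)
          * ((σ⁻¹ : finPerm A) : Equiv.Perm A) := rfl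
      rw [this]
      simp only [Equiv.Perm.mul_apply]
      rw [hσinvapp b]
    -- the moved set of π' within S \ T
    have hset : (S \ T) ∩ {b | (π' : Equiv.Perm A) b ≠ b}
        = ((S \ T) ∩ {b | (π : Equiv.Perm A) b ≠ b}) \ {a} := by
      ext b
      simp only [Set.mem_inter_iff, Set.mem_diff, Set.mem_setOf_eq, Set.mem_singleton_iff]
      constructor
      · rintro ⟨⟨hbS, hbT⟩, hbmov⟩
        rw [hπ'app] at hbmov
        have hbc : b ≠ c := fun h => hcS (h ▸ hbS)
        have hba : b ≠ a := by
          rintro rfl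
          rw [Equiv.swap_apply_left, hcMfix, Equiv.swap_apply_right] at hbmov
          exact hbmov rfl
        rw [Equiv.swap_apply_of_ne_of_ne hba hbc] at hbmov
        refine ⟨⟨⟨hbS, hbT⟩, ?_⟩, hba⟩
        intro h
        rw [h, Equiv.swap_apply_of_ne_of_ne hba hbc] at hbmov
        exact hbmov rfl
      · rintro ⟨⟨⟨hbS, hbT⟩, hbM⟩, hba⟩
        have hbc : b ≠ c := fun h => hcS (h ▸ hbS)
        refine ⟨⟨hbS, hbT⟩, ?_⟩
        rw [hπ'app, Equiv.swap_apply_of_ne_of_ne hba hbc]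
        by_cases hpa : (π : Equiv.Perm A) b = a
        · rw [hpa, Equiv.swap_apply_left]
          exact fun h => hbc h.symm
        · have hpc : (π : Equiv.Perm A) b ≠ c := by
            intro h
            have : (π : Equiv.Perm A) b = (π : Equiv.Perm A) c := by rw [h, hcMfix]
            exact hbc ((π : Equiv.Perm A).injective this)
          rw [Equiv.swap_apply_of_ne_of_ne hpa hpc]
          exact hbM
    -- π' fixes S ∩ T pointwise
    have hπ'fix : ∀ b ∈ S ∩ T, π' • b = b := by
      intro b hb
      have hba : b ≠ a := fun h => haT (h ▸ hb.2)
      have hbc : b ≠ c := fun h => hcS (h ▸ hb.1)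
      show (π' : Equiv.Perm A) b = b
      rw [hπ'app, Equiv.swap_apply_of_ne_of_ne hba hbc]
      have : (π : Equiv.Perm A) b = b := hπ b hb
      rw [this, Equiv.swap_apply_of_ne_of_ne hba hbc]
    -- cardinality decreases
    have hfinD : ((S \ T) ∩ {b | (π : Equiv.Perm A) b ≠ b}).Finite :=
      hMfin.subset (Set.inter_subset_right)
    have hlt : ((S \ T) ∩ {b | (π' : Equiv.Perm A) b ≠ b}).ncard < n := by
      rw [hset, ← hcard]
      exact Set.ncard_lt_ncard (Set.sdiff_singleton_ssubset.mpr haD) hfinD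
    have hπ'x : π' • x = x := IH _ hlt π' rfl hπ'fix
    rw [hπ'def, mul_smul, mul_smul, hσinvx] at hπ'x
    calc π • x = (σ⁻¹ : finPerm A) • σ • π • x := by rw [inv_smul_smul]
    _ = (σ⁻¹ : finPerm A) • x := by rw [hπ'x]
    _ = x := hσinvx

lemma supp_spec {A Z : Type*} [Infinite A] [MulAction (finPerm A) Z] (x : Z)
    (hx : FinitelySupported A x) :
    (supp A x).Finite ∧ MulAction.Supports (finPerm A) (supp A x) x := by
  obtain ⟨S0, hS0f, hS0⟩ := hx
  set F : Set (Set A) := {S | (S ⊆ S0 ∧ S.Finite) ∧ MulAction.Supports (finPerm A) S x} with hF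
  have hFfin : F.Finite := hS0f.finite_subsets.subset (fun S hS => hS.1.1)
  have hFne : F.Nonempty := ⟨S0, ⟨subset_rfl, hS0f⟩, hS0⟩
  obtain ⟨m, hmF, hmin⟩ : ∃ m ∈ F, ∀ a' ∈ F, id a' ≤ id m → id m = id a' := by
    obtain ⟨m, hmF, hmin⟩ := Set.Finite.exists_minimalFor id F hFfin hFne
    exact ⟨m, hmF, fun a' ha' h => le_antisymm (hmin ha' h) h⟩
  have hm_sub : ∀ S : Set A, S.Finite → MulAction.Supports (finPerm A) S x → m ⊆ S := by
    intro S hSf hSs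
    have h1 : (m ∩ S) ∈ F :=
      ⟨⟨(Set.inter_subset_left).trans hmF.1.1, hmF.1.2.inter_of_left _⟩,
        finPerm_supports_inter x hmF.1.2 hSf hmF.2 hSs⟩
    have h2 := hmin _ h1 (Set.inter_subset_left)
    have h3 : m = m ∩ S := h2
    rw [h3]
    exact Set.inter_subset_right
  have heq : supp A x = m := by
    apply subset_antisymm
    · exact Set.sInter_subset_of_mem ⟨hmF.1.2, hmF.2⟩
    · intro a ha
      apply Set.mem_sInter.2
      intro S hS
      exact hm_sub S hS.1 hS.2 ha
  rw [heq]
  exact ⟨hmF.1.2, hmF.2⟩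

/-- if a finitely supported subset `X` of an invariant set contains an
infinite finitely supported subset `Y` carrying a finitely supported total order `R`
(a finitely supported subset of `Y × Y`), then every element of `Y` is supported by
`supp(R) ∪ supp(Y)`, so `Y` is uniformly supported; consequently `X` contains an
infinite uniformly supported subset. -/
theorem stmt19 {A Z : Type*} [Infinite A] [MulAction (finPerm A) Z]
    (hinv : ∀ z : Z, FinitelySupported A z) (X : Set Z)
    (hX : FinitelySupported A X)
    (Y : Set Z) (hYX : Y ⊆ X) (hYinf : Y.Infinite) (hY : FinitelySupported A Y)
    (R : Set (Z × Z)) (hR : FinitelySupported A R) (hRY : R ⊆ Y ×ˢ Y)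
    (hrefl : ∀ y ∈ Y, (y, y) ∈ R)
    (hantisymm : ∀ x y : Z, (x, y) ∈ R → (y, x) ∈ R → x = y)
    (htrans : ∀ x y z : Z, (x, y) ∈ R → (y, z) ∈ R → (x, z) ∈ R)
    (htotal : ∀ x ∈ Y, ∀ y ∈ Y, (x, y) ∈ R ∨ (y, x) ∈ R) :
    (∀ y ∈ Y, MulAction.Supports (finPerm A) (supp A R ∪ supp A Y) y) ∧
      UniformlySupported A Y ∧
      ∃ W ⊆ X, W.Infinite ∧ UniformlySupported A W := by
    classical
  obtain ⟨hRfin, hRsupp⟩ := supp_spec R hR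
  obtain ⟨hYfin, hYsupp⟩ := supp_spec Y hY
  have main : ∀ y ∈ Y, MulAction.Supports (finPerm A) (supp A R ∪ supp A Y) y := by
    intro y hy π hfix
    -- π fixes supp R and supp Y pointwise
    have hπR : π • R = R := hRsupp π (fun a ha => hfix (Set.mem_union_left _ ha))
    have hπY : π • Y = Y := hYsupp π (fun a ha => hfix (Set.mem_union_right _ ha))
    have hstep : ∀ u v : Z, (u, v) ∈ R → (π • u, π • v) ∈ R := by
      intro u v huv
      have : π • (u, v) ∈ π • R := Set.smul_mem_smul_set huv
      rwa [hπR] at this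
    have hπyY : π • y ∈ Y := by
      rw [← hπY]
      exact Set.smul_mem_smul_set hy
    obtain ⟨n, hn0, hn⟩ := finPerm_pow_eq_one π
    have hπny : (π ^ n) • y = y := by rw [hn, one_smul]
    have key : ∀ Q : Set (Z × Z),
        (∀ u v : Z, (u, v) ∈ Q → (π • u, π • v) ∈ Q) →
        (∀ a b c : Z, (a, b) ∈ Q → (b, c) ∈ Q → (a, c) ∈ Q) →
        (π • y, π • y) ∈ Q → (y, π • y) ∈ Q → (π • y, y) ∈ Q := by
      intro Q hQstep hQtrans hQrefl hbase
      have claim1 : ∀ k : ℕ, ((π ^ k) • y, (π ^ (k + 1)) • y) ∈ Q := by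
        intro k
        induction k with
        | zero => simpa using hbase
        | succ j ih =>
          have := hQstep _ _ ih
          rwa [← mul_smul, ← mul_smul, ← pow_succ', ← pow_succ'] at this
      have chain : ∀ k : ℕ, ((π ^ 1) • y, (π ^ (k + 1)) • y) ∈ Q := by
        intro k
        induction k with
        | zero => simpa [pow_one] using hQrefl
        | succ j ih => exact hQtrans _ _ _ ih (claim1 (j + 1))
      have := chain (n - 1)
      rw [show n - 1 + 1 = n by omega, hπny, pow_one] at this
      exact this
    by_cases hne : π • y = y
    · exact hne
    · rcases htotal y hy (π • y) hπyY with h | h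
      · have := key R hstep htrans (hrefl _ hπyY) h
        exact absurd (hantisymm _ _ h this).symm hne
      · have := key {p : Z × Z | (p.2, p.1) ∈ R}
          (fun u v huv => hstep v u huv)
          (fun a b c hab hbc => htrans c b a hbc hab)
          (hrefl _ hπyY) h
        exact absurd (hantisymm _ _ this h).symm hne
  have hus : UniformlySupported A Y :=
    ⟨supp A R ∪ supp A Y, hRfin.union hYfin, main⟩
  exact ⟨main, hus, Y, hYX, hYinf, hus⟩
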